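/- Let (E, Λ, p) and (F, Λ, q) be locally Hilbert space models over the same directed index set Λ. Let N₁, N₁' ∈ 𝓛(E) satisfy ⟨N₁ x, y⟩ = ⟨x, N₁' y⟩ for all x, y ∈ E and N₁ ∘ N₁' = N₁' ∘ N₁ (i.e. N₁ is locally normal with adjoint N₁'), and let N₂, N₂' ∈ 𝓛(F) satisfy ⟨N₂ x, y⟩ = ⟨x, N₂' y⟩ for all x, y ∈ F and N₂ ∘ N₂' = N₂' ∘ N₂. If S ∈ 𝓛(E, F) satisfies S ∘ N₁ = N₂ ∘ S, then S ∘ N₁' = N₂' ∘ S. -/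

import Mathlib

open scoped InnerProductSpace

/-- The orthogonal projection of an inner product space onto a complete submodule,
viewed as a continuous linear map of the ambient space into itself. -/
noncomputable def projL {E : Type*} [NormedAddCommGroup E] [InnerProductSpace ℂ E]
    (K : Submodule ℂ E) [CompleteSpace K] : E →L[ℂ] E :=
  K.subtypeL.comp K.orthogonalProjection

/-- An element of `𝓛(E, F)` for two locally Hilbert space models `(E, Λ, p)` and `(F, Λ, q)`
over the same index set: a linear map `E → F` mapping each `p l` into `q l`, whose
restrictions `p l → q l` are continuous (bounded) operators, and which intertwines the
orthogonal projections `projL (p l)` and `projL (q l)`. -/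
structure LocOpPair {E F : Type*} [NormedAddCommGroup E] [InnerProductSpace ℂ E]
    [NormedAddCommGroup F] [InnerProductSpace ℂ F]
    {Λ : Type*} (p : Λ → Submodule ℂ E) (q : Λ → Submodule ℂ F)
    [∀ l, CompleteSpace (p l)] [∀ l, CompleteSpace (q l)] where
  toFun : E →ₗ[ℂ] F
  restr : ∀ l, p l →L[ℂ] q l
  restr_eq : ∀ l (x : p l), (restr l x : F) = toFun x
  proj_comm : ∀ l (x : E), toFun (projL (p l) x) = projL (q l) (toFun x)

/-- An element of `𝓛(E)`: the case `p = q` of `LocOpPair`. -/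
abbrev LocOp {E : Type*} [NormedAddCommGroup E] [InnerProductSpace ℂ E]
    {Λ : Type*} (p : Λ → Submodule ℂ E) [∀ l, CompleteSpace (p l)] :=
  LocOpPair p p


open scoped InnerProductSpace
open NormedSpace ContinuousLinearMap

section Hilbert

variable {H₁ H₂ : Type*}
  [NormedAddCommGroup H₁] [InnerProductSpace ℂ H₁] [CompleteSpace H₁]
  [NormedAddCommGroup H₂] [InnerProductSpace ℂ H₂] [CompleteSpace H₂]

/-- If `S` intertwines `M` and `N`, it intertwines their exponentials. -/
lemma intertwine_exp (S : H₁ →L[ℂ] H₂) (M : H₁ →L[ℂ] H₁) (N : H₂ →L[ℂ] H₂)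
    (h : S.comp M = N.comp S) :
    S.comp (exp M) = (exp N).comp S := by
  have hpow : ∀ n : ℕ, S.comp (M ^ n) = (N ^ n).comp S := by
    intro n
    induction n with
    | zero => simp [ContinuousLinearMap.one_def]
    | succ n ih =>
      rw [pow_succ, pow_succ]
      ext x
      have h1 := congrFun (congrArg DFunLike.coe h)
      have h2 := congrFun (congrArg DFunLike.coe ih)
      simp only [comp_apply, ContinuousLinearMap.mul_apply] at h1 h2 ⊢
      rw [h2, h1]
  let Φ : (H₁ →L[ℂ] H₁) →L[ℂ] (H₁ →L[ℂ] H₂) := ContinuousLinearMap.compL ℂ H₁ H₁ H₂ S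
  let Ψ : (H₂ →L[ℂ] H₂) →L[ℂ] (H₁ →L[ℂ] H₂) := (ContinuousLinearMap.compL ℂ H₁ H₂ H₂).flip S
  have hΦ : S.comp (exp M) = Φ (exp M) := rfl
  have hΨ : (exp N).comp S = Ψ (exp N) := rfl
  rw [hΦ, hΨ, exp_eq_tsum ℂ, exp_eq_tsum ℂ, Φ.map_tsum (expSeries_summable' (𝕂 := ℂ) M),
    Ψ.map_tsum (expSeries_summable' (𝕂 := ℂ) N)]
  congr 1
  funext n
  simp only [Φ, Ψ, map_smul, ContinuousLinearMap.compL_apply,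
    ContinuousLinearMap.flip_apply, hpow n]

/-- The exponential of a skew-adjoint operator is isometric. -/
lemma exp_skew_isometry (K : H₁ →L[ℂ] H₁) (hK : star K = -K) (v : H₁) :
    ‖exp K v‖ = ‖v‖ := by
  let +nondep : NormedAlgebra ℚ (H₁ →L[ℂ] H₁) := .restrictScalars ℚ ℂ _
  have hu : exp K ∈ unitary (H₁ →L[ℂ] H₁) :=
    exp_mem_unitary_of_mem_skewAdjoint (skewAdjoint.mem_iff.mpr hK)
  have h1 : star (exp K) * exp K = 1 := (Unitary.mem_iff.mp hu).1
  have key : ⟪exp K v, exp K v⟫_ℂ = ⟪v, v⟫_ℂ := by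
    rw [← ContinuousLinearMap.adjoint_inner_left, ← ContinuousLinearMap.star_eq_adjoint]
    have := congrFun (congrArg DFunLike.coe h1) v
    simp only [ContinuousLinearMap.mul_apply, ContinuousLinearMap.one_apply] at this
    rw [this]
  have h3 : ‖exp K v‖ ^ 2 = ‖v‖ ^ 2 := by
    have := key
    rw [inner_self_eq_norm_sq_to_K, inner_self_eq_norm_sq_to_K] at this
    exact_mod_cast this
  nlinarith [norm_nonneg (exp K v), norm_nonneg v]

/-- Fuglede–Putnam theorem for Hilbert spaces. -/
theorem fp_hilbert (A A' : H₁ →L[ℂ] H₁) (B B' : H₂ →L[ℂ] H₂) (S : H₁ →L[ℂ] H₂)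
    (hA : ∀ x y : H₁, ⟪A x, y⟫_ℂ = ⟪x, A' y⟫_ℂ)
    (hB : ∀ x y : H₂, ⟪B x, y⟫_ℂ = ⟪x, B' y⟫_ℂ)
    (hnA : A.comp A' = A'.comp A) (hnB : B.comp B' = B'.comp B)
    (hS : S.comp A = B.comp S) : S.comp A' = B'.comp S := by
  let +nondep : NormedAlgebra ℚ (H₁ →L[ℂ] H₁) := .restrictScalars ℚ ℂ _
  let +nondep : NormedAlgebra ℚ (H₂ →L[ℂ] H₂) := .restrictScalars ℚ ℂ _
  have hAadj : A = ContinuousLinearMap.adjoint A' :=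
    (ContinuousLinearMap.eq_adjoint_iff A A').mpr hA
  have hBadj : B = ContinuousLinearMap.adjoint B' :=
    (ContinuousLinearMap.eq_adjoint_iff B B').mpr hB
  have hA'adj : A' = ContinuousLinearMap.adjoint A := by
    rw [hAadj, ContinuousLinearMap.adjoint_adjoint]
  have hB'adj : B' = ContinuousLinearMap.adjoint B := by
    rw [hBadj, ContinuousLinearMap.adjoint_adjoint]
  have starA : star A = A' := by rw [ContinuousLinearMap.star_eq_adjoint, ← hA'adj]
  have starA' : star A' = A := by rw [ContinuousLinearMap.star_eq_adjoint, ← hAadj]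
  have starB : star B = B' := by rw [ContinuousLinearMap.star_eq_adjoint, ← hB'adj]
  have starB' : star B' = B := by rw [ContinuousLinearMap.star_eq_adjoint, ← hBadj]
  -- intertwining of exponentials
  have hiexp : ∀ μ : ℂ, S.comp (exp (μ • A)) = (exp (μ • B)).comp S := by
    intro μ
    refine intertwine_exp S _ _ ?_
    rw [ContinuousLinearMap.comp_smul, ContinuousLinearMap.smul_comp, hS]
  -- the entire function
  set f : ℂ → (H₁ →L[ℂ] H₂) :=
    fun z => ((exp (-(z • B'))).comp S).comp (exp (z • A')) with hf
  -- rewrite f with skew-adjoint exponents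
  have hrw : ∀ z : ℂ,
      f z = ((exp (-(z • B') + (starRingEnd ℂ) z • B)).comp S).comp
        (exp (-((starRingEnd ℂ) z • A) + z • A')) := by
    intro z
    set μ := (starRingEnd ℂ) z
    have e1 : (exp (μ • A)).comp (exp (-(μ • A))) = 1 := by
      rw [← ContinuousLinearMap.mul_def, ← exp_add_of_commute (Commute.refl (μ • A)).neg_right]
      simp
    have hins : ((exp (μ • B)).comp S).comp (exp (-(μ • A))) = S := by
      rw [← hiexp μ, ContinuousLinearMap.comp_assoc, e1]
      simp [ContinuousLinearMap.one_def]
    have hcommB : Commute (-(z • B')) (μ • B) := by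
      have hc : Commute B' B := by
        show B' * B = B * B'
        rw [ContinuousLinearMap.mul_def, ContinuousLinearMap.mul_def, hnB]
      exact ((hc.smul_left z).smul_right μ).neg_left
    have hcommA : Commute (-(μ • A)) (z • A') := by
      have hc : Commute A A' := by
        show A * A' = A' * A
        rw [ContinuousLinearMap.mul_def, ContinuousLinearMap.mul_def, hnA]
      exact ((hc.smul_left μ).smul_right z).neg_left
    calc f z = ((exp (-(z • B'))).comp (((exp (μ • B)).comp S).comp
          (exp (-(μ • A))))).comp (exp (z • A')) := by rw [hf, hins]
      _ = (((exp (-(z • B'))).comp (exp (μ • B))).comp S).comp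
          ((exp (-(μ • A))).comp (exp (z • A'))) := by
            simp only [ContinuousLinearMap.comp_assoc]
      _ = _ := by
            rw [exp_add_of_commute hcommB, exp_add_of_commute hcommA,
              ContinuousLinearMap.mul_def, ContinuousLinearMap.mul_def]
  -- norm bound
  have hbound : ∀ z : ℂ, ‖f z‖ ≤ ‖S‖ := by
    intro z
    set μ := (starRingEnd ℂ) z
    have hskew₂ : star (-(z • B') + μ • B) = -(-(z • B') + μ • B) := by
      simp only [star_add, star_neg, star_smul, starB, starB', RCLike.star_def]
      simp only [μ, Complex.conj_conj]
      abel
    have hskew₁ : star (-(μ • A) + z • A') = -(-(μ • A) + z • A') := by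
      simp only [star_add, star_neg, star_smul, starA, starA', RCLike.star_def]
      simp only [μ, Complex.conj_conj]
      abel
    rw [hrw z]
    refine ContinuousLinearMap.opNorm_le_bound _ (norm_nonneg S) fun x => ?_
    simp only [ContinuousLinearMap.comp_apply]
    rw [exp_skew_isometry _ hskew₂]
    calc ‖S (exp (-(μ • A) + z • A') x)‖ ≤ ‖S‖ * ‖exp (-(μ • A) + z • A') x‖ :=
          S.le_opNorm _
      _ = ‖S‖ * ‖x‖ := by rw [exp_skew_isometry _ hskew₁]
  -- differentiability
  have hdiff : Differentiable ℂ f := by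
    have d1 : Differentiable ℂ fun z : ℂ => exp (z • A') := fun z =>
      (hasDerivAt_exp_smul_const (𝕂 := ℂ) A' z).differentiableAt
    have d2 : Differentiable ℂ fun z : ℂ => exp (-(z • B')) := by
      have : (fun z : ℂ => exp (-(z • B'))) = (fun w : ℂ => exp (w • B')) ∘ Neg.neg := by
        funext z; simp [neg_smul]
      rw [this]
      exact Differentiable.comp
        (fun w => (hasDerivAt_exp_smul_const (𝕂 := ℂ) B' w).differentiableAt)
        differentiable_neg
    exact (d2.clm_comp (differentiable_const S)).clm_comp d1
  -- Liouville
  have hconst : ∀ z : ℂ, f z = f 0 := by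
    intro z
    refine hdiff.apply_eq_apply_of_bounded ?_ z 0
    have hsub : Set.range f ⊆ Metric.closedBall 0 ‖S‖ := by
      rintro _ ⟨z, rfl⟩
      rw [Metric.mem_closedBall, dist_zero_right]
      exact hbound z
    exact Bornology.IsBounded.subset (Metric.isBounded_closedBall) hsub
  have hf0 : f 0 = S := by
    simp [hf, ContinuousLinearMap.one_def]
  -- deduce S ∘ exp(z A') = exp(z B') ∘ S
  have hkey : ∀ z : ℂ, S.comp (exp (z • A')) = (exp (z • B')).comp S := by
    intro z
    have h1 : f z = S := (hconst z).trans hf0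
    have h2 : (exp (z • B')).comp (exp (-(z • B'))) = 1 := by
      rw [← ContinuousLinearMap.mul_def, ← exp_add_of_commute (Commute.refl (z • B')).neg_right]
      simp
    calc S.comp (exp (z • A'))
        = (exp (z • B')).comp (((exp (-(z • B'))).comp S).comp (exp (z • A'))) := by
          simp only [← ContinuousLinearMap.comp_assoc, h2, ContinuousLinearMap.one_def,
            ContinuousLinearMap.id_comp]
      _ = (exp (z • B')).comp (f z) := by rw [hf]
      _ = (exp (z • B')).comp S := by rw [h1]
  -- differentiate at 0
  let Φ : (H₁ →L[ℂ] H₁) →L[ℂ] (H₁ →L[ℂ] H₂) := ContinuousLinearMap.compL ℂ H₁ H₁ H₂ S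
  let Ψ : (H₂ →L[ℂ] H₂) →L[ℂ] (H₁ →L[ℂ] H₂) := (ContinuousLinearMap.compL ℂ H₁ H₂ H₂).flip S
  have hd1 : HasDerivAt (fun z : ℂ => S.comp (exp (z • A'))) (S.comp A') 0 := by
    have base := hasDerivAt_exp_smul_const (𝕂 := ℂ) A' 0
    have := Φ.hasFDerivAt.comp_hasDerivAt 0 base
    simpa [Φ, zero_smul, exp_zero, one_mul, ContinuousLinearMap.mul_def, Function.comp_def] using this
  have hd2 : HasDerivAt (fun z : ℂ => (exp (z • B')).comp S) (B'.comp S) 0 := by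
    have base := hasDerivAt_exp_smul_const' (𝕂 := ℂ) B' 0
    have := Ψ.hasFDerivAt.comp_hasDerivAt 0 base
    simpa [Ψ, zero_smul, exp_zero, mul_one, ContinuousLinearMap.mul_def, Function.comp_def] using this
  have heq : (fun z : ℂ => S.comp (exp (z • A'))) =
      (fun z : ℂ => (exp (z • B')).comp S) := funext hkey
  exact hd1.unique (heq ▸ hd2)

end Hilbert

/-- **Theorem 2.2 (v) (Fuglede–Putnam).**  Let `N₁ ∈ 𝓛(E)` be locally normal with adjoint
`N₁'`, let `N₂ ∈ 𝓛(F)` be locally normal with adjoint `N₂'`, and let `S ∈ 𝓛(E, F)` satisfy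
`S ∘ N₁ = N₂ ∘ S`.  Then `S ∘ N₁' = N₂' ∘ S`. -/
theorem locOp_fuglede_putnam
    {E F : Type*} [NormedAddCommGroup E] [InnerProductSpace ℂ E]
    [NormedAddCommGroup F] [InnerProductSpace ℂ F]
    {Λ : Type*} [PartialOrder Λ] [IsDirected Λ (· ≤ ·)]
    (p : Λ → Submodule ℂ E) (q : Λ → Submodule ℂ F)
    [∀ l, CompleteSpace (p l)] [∀ l, CompleteSpace (q l)]
    (hmonop : Monotone p) (hexhp : ∀ x : E, ∃ l, x ∈ p l)
    (hmonoq : Monotone q) (hexhq : ∀ y : F, ∃ l, y ∈ q l)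
    (N₁ N₁' : LocOp p) (N₂ N₂' : LocOp q) (S : LocOpPair p q)
    (hadj₁ : ∀ x y : E, ⟪N₁.toFun x, y⟫_ℂ = ⟪x, N₁'.toFun y⟫_ℂ)
    (hnormal₁ : ∀ x : E, N₁.toFun (N₁'.toFun x) = N₁'.toFun (N₁.toFun x))
    (hadj₂ : ∀ x y : F, ⟪N₂.toFun x, y⟫_ℂ = ⟪x, N₂'.toFun y⟫_ℂ)
    (hnormal₂ : ∀ x : F, N₂.toFun (N₂'.toFun x) = N₂'.toFun (N₂.toFun x))
    (hS : ∀ x : E, S.toFun (N₁.toFun x) = N₂.toFun (S.toFun x)) :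
    ∀ x : E, S.toFun (N₁'.toFun x) = N₂'.toFun (S.toFun x) := by
  intro x
  obtain ⟨l, hx⟩ := hexhp x
  set A : p l →L[ℂ] p l := N₁.restr l
  set A' : p l →L[ℂ] p l := N₁'.restr l
  set B : q l →L[ℂ] q l := N₂.restr l
  set B' : q l →L[ℂ] q l := N₂'.restr l
  set Sl : p l →L[ℂ] q l := S.restr l
  have hAadj : ∀ u v : p l, ⟪A u, v⟫_ℂ = ⟪u, A' v⟫_ℂ := by
    intro u v
    rw [Submodule.coe_inner, Submodule.coe_inner, N₁.restr_eq l u, N₁'.restr_eq l v]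
    exact hadj₁ u v
  have hBadj : ∀ u v : q l, ⟪B u, v⟫_ℂ = ⟪u, B' v⟫_ℂ := by
    intro u v
    rw [Submodule.coe_inner, Submodule.coe_inner, N₂.restr_eq l u, N₂'.restr_eq l v]
    exact hadj₂ u v
  have hnA : A.comp A' = A'.comp A := by
    ext u
    simp only [ContinuousLinearMap.comp_apply]
    rw [N₁.restr_eq l (A' u), N₁'.restr_eq l (A u), N₁.restr_eq l u, N₁'.restr_eq l u]
    exact hnormal₁ u
  have hnB : B.comp B' = B'.comp B := by
    ext u
    simp only [ContinuousLinearMap.comp_apply]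
    rw [N₂.restr_eq l (B' u), N₂'.restr_eq l (B u), N₂.restr_eq l u, N₂'.restr_eq l u]
    exact hnormal₂ u
  have hSl : Sl.comp A = B.comp Sl := by
    ext u
    simp only [ContinuousLinearMap.comp_apply]
    rw [S.restr_eq l (A u), N₂.restr_eq l (Sl u), N₁.restr_eq l u, S.restr_eq l u]
    exact hS u
  have key := fp_hilbert A A' B B' Sl hAadj hBadj hnA hnB hSl
  have := congrFun (congrArg DFunLike.coe key) ⟨x, hx⟩
  simp only [ContinuousLinearMap.comp_apply] at this
  have hcoe := congrArg (Subtype.val) this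
  rw [S.restr_eq l (A' ⟨x, hx⟩), N₂'.restr_eq l (Sl ⟨x, hx⟩),
    N₁'.restr_eq l ⟨x, hx⟩, S.restr_eq l ⟨x, hx⟩] at hcoe
  exact hcoe
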